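/- For every integer a and all signs ε₁, ε₂ ∈ {1, −1}, the group Π(a, 1, ε₁, ε₂) is isomorphic to Π(a, 1, ε₂, ε₁). -/

import Mathlib

/-- The relator set of the presentation
`⟨s₁, s₂, s₃ ∣ s₁s₂s₁⁻¹ = s₃^a s₂^ε, s₁s₃s₁⁻¹ = s₃^{ε₁}, s₂s₃s₂⁻¹ = s₃^{ε₂}⟩`. -/
def PiRels (a ε ε₁ ε₂ : ℤ) : Set (FreeGroup (Fin 3)) :=
  { FreeGroup.of 0 * FreeGroup.of 1 * (FreeGroup.of 0)⁻¹ * FreeGroup.of 1 ^ (-ε) *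
      FreeGroup.of 2 ^ (-a),
    FreeGroup.of 0 * FreeGroup.of 2 * (FreeGroup.of 0)⁻¹ * FreeGroup.of 2 ^ (-ε₁),
    FreeGroup.of 1 * FreeGroup.of 2 * (FreeGroup.of 1)⁻¹ * FreeGroup.of 2 ^ (-ε₂) }

/-- The group `Π(a, ε, ε₁, ε₂)` with presentation
`⟨s₁, s₂, s₃ ∣ s₁s₂s₁⁻¹ = s₃^a s₂^ε, s₁s₃s₁⁻¹ = s₃^{ε₁}, s₂s₃s₂⁻¹ = s₃^{ε₂}⟩`. -/
abbrev PiGroup (a ε ε₁ ε₂ : ℤ) : Type := PresentedGroup (PiRels a ε ε₁ ε₂)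
namespace PiSwapAux

variable {a ε ε₁ ε₂ : ℤ}

lemma rel_one {r : FreeGroup (Fin 3)} (hr : r ∈ PiRels a ε ε₁ ε₂) :
    PresentedGroup.mk (PiRels a ε ε₁ ε₂) r = 1 :=
  (QuotientGroup.eq_one_iff r).mpr (Subgroup.subset_normalClosure hr)

lemma rel1 : (PresentedGroup.of 0 : PiGroup a ε ε₁ ε₂) * .of 1 * (.of 0)⁻¹
    = (PresentedGroup.of 2) ^ a * (.of 1) ^ ε := by
  have h := rel_one (a := a) (ε := ε) (ε₁ := ε₁) (ε₂ := ε₂) (Set.mem_insert _ _)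
  simp only [map_mul, map_inv, map_zpow] at h
  set x := (PresentedGroup.of 0 : PiGroup a ε ε₁ ε₂)
  set y := (PresentedGroup.of 1 : PiGroup a ε ε₁ ε₂)
  set z := (PresentedGroup.of 2 : PiGroup a ε ε₁ ε₂)
  have hx : PresentedGroup.mk (PiRels a ε ε₁ ε₂) (FreeGroup.of 0) = x := rfl
  have hy : PresentedGroup.mk (PiRels a ε ε₁ ε₂) (FreeGroup.of 1) = y := rfl
  have hz : PresentedGroup.mk (PiRels a ε ε₁ ε₂) (FreeGroup.of 2) = z := rfl
  rw [hx, hy, hz] at h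
  have : x * y * x⁻¹ * y ^ (-ε) = z ^ a := by
    have := mul_eq_one_iff_eq_inv.mp h
    rw [this]; group
  calc x * y * x⁻¹ = (x * y * x⁻¹ * y ^ (-ε)) * y ^ ε := by group
    _ = z ^ a * y ^ ε := by rw [this]

lemma rel2 : (PresentedGroup.of 0 : PiGroup a ε ε₁ ε₂) * .of 2 * (.of 0)⁻¹
    = (PresentedGroup.of 2) ^ ε₁ := by
  have h := rel_one (a := a) (ε := ε) (ε₁ := ε₁) (ε₂ := ε₂)
    (Set.mem_insert_of_mem _ (Set.mem_insert _ _))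
  simp only [map_mul, map_inv, map_zpow] at h
  have hx : PresentedGroup.mk (PiRels a ε ε₁ ε₂) (FreeGroup.of 0) = PresentedGroup.of 0 := rfl
  have hz : PresentedGroup.mk (PiRels a ε ε₁ ε₂) (FreeGroup.of 2) = PresentedGroup.of 2 := rfl
  rw [hx, hz] at h
  have := mul_eq_one_iff_eq_inv.mp h
  rw [this]; group

lemma rel3 : (PresentedGroup.of 1 : PiGroup a ε ε₁ ε₂) * .of 2 * (.of 1)⁻¹
    = (PresentedGroup.of 2) ^ ε₂ := by
  have h := rel_one (a := a) (ε := ε) (ε₁ := ε₁) (ε₂ := ε₂)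
    (Set.mem_insert_of_mem _ (Set.mem_insert_of_mem _ rfl))
  simp only [map_mul, map_inv, map_zpow] at h
  have hy : PresentedGroup.mk (PiRels a ε ε₁ ε₂) (FreeGroup.of 1) = PresentedGroup.of 1 := rfl
  have hz : PresentedGroup.mk (PiRels a ε ε₁ ε₂) (FreeGroup.of 2) = PresentedGroup.of 2 := rfl
  rw [hy, hz] at h
  have := mul_eq_one_iff_eq_inv.mp h
  rw [this]; group

/-- The generator images for the swap map. -/
def sw (a ε₁ ε₂ : ℤ) : Fin 3 → PiGroup a 1 ε₂ ε₁ :=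
  ![PresentedGroup.of 1, PresentedGroup.of 0, (PresentedGroup.of 2)⁻¹]

lemma sw_rels : ∀ r ∈ PiRels a 1 ε₁ ε₂, FreeGroup.lift (sw a ε₁ ε₂) r = 1 := by
  intro r hr
  set x := (PresentedGroup.of 0 : PiGroup a 1 ε₂ ε₁)
  set y := (PresentedGroup.of 1 : PiGroup a 1 ε₂ ε₁)
  set z := (PresentedGroup.of 2 : PiGroup a 1 ε₂ ε₁)
  have hr1 : x * y * x⁻¹ = z ^ a * y ^ (1:ℤ) := rel1
  have hr2 : x * z * x⁻¹ = z ^ ε₂ := rel2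
  have hr3 : y * z * y⁻¹ = z ^ ε₁ := rel3
  rcases hr with h | h | h <;> subst h <;>
    simp only [map_mul, map_inv, map_zpow, FreeGroup.lift_apply_of, sw,
      Matrix.cons_val_zero, Matrix.cons_val_one, Matrix.head_cons,
      Matrix.cons_val_two, Matrix.tail_cons]
  · -- y * x * y⁻¹ * x^{-1} * (z⁻¹)^{-a} = 1
    have : y * x * y⁻¹ = z ^ (-a) * x := by
      have : x * y = z ^ a * y ^ (1:ℤ) * x := by rw [← hr1]; group
      rw [zpow_one] at this
      calc y * x * y⁻¹ = z ^ (-a) * (z ^ a * y * x * (x*y)⁻¹ * x) := by group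
        _ = z ^ (-a) * (z ^ a * y * x * (z ^ a * y * x)⁻¹ * x) := by rw [this]
        _ = z ^ (-a) * x := by group
    rw [this]; group
    exact (by group : z ^ (-a) * x * x ^ (-1 : ℤ) * z ^ a = 1)
  · -- y * z⁻¹ * y⁻¹ * (z⁻¹)^{-ε₁} = 1
    have : y * z⁻¹ * y⁻¹ = z ^ (-ε₁) := by
      have h' : y * z⁻¹ * y⁻¹ = (y * z * y⁻¹)⁻¹ := by group
      rw [h', hr3]; group
    rw [show y * z⁻¹ * y⁻¹ * (z⁻¹) ^ (-ε₁) = (y * z⁻¹ * y⁻¹) * z ^ ε₁ by group, this]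
    group
  · have : x * z⁻¹ * x⁻¹ = z ^ (-ε₂) := by
      have h' : x * z⁻¹ * x⁻¹ = (x * z * x⁻¹)⁻¹ := by group
      rw [h', hr2]; group
    rw [show x * z⁻¹ * x⁻¹ * (z⁻¹) ^ (-ε₂) = (x * z⁻¹ * x⁻¹) * z ^ ε₂ by group, this]
    group

/-- The swap homomorphism. -/
def swHom (a ε₁ ε₂ : ℤ) : PiGroup a 1 ε₁ ε₂ →* PiGroup a 1 ε₂ ε₁ :=
  PresentedGroup.toGroup sw_rels

lemma swHom_of (i : Fin 3) : swHom a ε₁ ε₂ (.of i) = sw a ε₁ ε₂ i :=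
  PresentedGroup.toGroup.of _

lemma swHom_comp : (swHom a ε₂ ε₁).comp (swHom a ε₁ ε₂) = MonoidHom.id _ := by
  ext i
  fin_cases i <;>
    simp [swHom_of, sw, MonoidHom.comp_apply]

end PiSwapAux


/-- `Π(a, 1, ε₁, ε₂) ≅ Π(a, 1, ε₂, ε₁)`. -/
theorem PiGroup_iso_swap (a ε₁ ε₂ : ℤ)
    (hε₁ : ε₁ = 1 ∨ ε₁ = -1) (hε₂ : ε₂ = 1 ∨ ε₂ = -1) :
    Nonempty (PiGroup a 1 ε₁ ε₂ ≃* PiGroup a 1 ε₂ ε₁) := by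
  exact ⟨MonoidHom.toMulEquiv (PiSwapAux.swHom a ε₁ ε₂) (PiSwapAux.swHom a ε₂ ε₁)
    PiSwapAux.swHom_comp PiSwapAux.swHom_comp⟩
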